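/- Let T > 0, d ∈ ℕ, and let x, y : [0, T] → ℝ^d be continuously differentiable paths with derivatives x' and y'. Then there exists a unique continuous function f : [0, T] × [0, T] → ℝ satisfying the Goursat-type integral equation f(s, t) = 1 + ∫_0^s ∫_0^t f(u, v) ⟨x'(u), y'(v)⟩ du dv for all (s, t) ∈ [0, T] × [0, T], where ⟨·,·⟩ denotes the Euclidean inner product on ℝ^d. -/

import Mathlib

open MeasureTheory

namespace GoursatAux

noncomputable def proj (T t : ℝ) : ℝ := max 0 (min t T)

lemma continuous_proj (T : ℝ) : Continuous (proj T) :=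
  continuous_const.max (continuous_id.min continuous_const)

lemma proj_mem {T : ℝ} (hT : 0 ≤ T) (t : ℝ) : proj T t ∈ Set.Icc 0 T :=
  ⟨le_max_left _ _, max_le hT (min_le_right _ _)⟩

lemma proj_eq_self {T t : ℝ} (ht : t ∈ Set.Icc (0:ℝ) T) : proj T t = t := by
  simp only [proj, min_eq_left ht.2, max_eq_right ht.1]

noncomputable def Phi (T : ℝ) (k f : ℝ × ℝ → ℝ) : ℝ × ℝ → ℝ :=
  fun p => 1 + ∫ u in (0:ℝ)..proj T p.1, ∫ v in (0:ℝ)..proj T p.2, f (u, v) * k (u, v)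

lemma inner_cont {k f : ℝ × ℝ → ℝ} (hk : Continuous k) (hf : Continuous f) :
    Continuous fun q : ℝ × ℝ => ∫ v in (0:ℝ)..q.2, f (q.1, v) * k (q.1, v) := by
  apply intervalIntegral.continuous_parametric_primitive_of_continuous
    (f := fun (a : ℝ) (t : ℝ) => f (a, t) * k (a, t)) (μ := volume)
  exact ((hf.comp (continuous_fst.prodMk continuous_snd)).mul
    (hk.comp (continuous_fst.prodMk continuous_snd)))

lemma inner_cont' {k f : ℝ × ℝ → ℝ} (hk : Continuous k) (hf : Continuous f) (b : ℝ) :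
    Continuous fun u : ℝ => ∫ v in (0:ℝ)..b, f (u, v) * k (u, v) := by
  have h2 : Continuous fun u : ℝ => (u, b) := continuous_id.prodMk continuous_const
  simpa [Function.comp_def] using (inner_cont hk hf).comp h2

lemma phi_cont (T : ℝ) {k f : ℝ × ℝ → ℝ} (hk : Continuous k) (hf : Continuous f) :
    Continuous (Phi T k f) := by
  have hG := inner_cont hk hf
  have hJ : Continuous fun q : ℝ × ℝ =>
      ∫ u in (0:ℝ)..q.2, (fun r : ℝ × ℝ => ∫ v in (0:ℝ)..r.2, f (r.1, v) * k (r.1, v)) (u, q.1) := by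
    apply intervalIntegral.continuous_parametric_primitive_of_continuous
      (f := fun (b : ℝ) (u : ℝ) =>
        (fun r : ℝ × ℝ => ∫ v in (0:ℝ)..r.2, f (r.1, v) * k (r.1, v)) (u, b)) (μ := volume)
    · simpa [Function.comp_def, Function.uncurry_def] using hG.comp
        ((continuous_snd.prodMk continuous_fst) :
          Continuous fun q : ℝ × ℝ => (q.2, q.1))
  have hc : Continuous fun p : ℝ × ℝ => (proj T p.2, proj T p.1) :=
    ((continuous_proj T).comp continuous_snd).prodMk ((continuous_proj T).comp continuous_fst)
  have := hJ.comp hc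
  simp only [Function.comp] at this
  exact continuous_const.add this

lemma phi_step (T : ℝ) (hT : 0 ≤ T) (k : ℝ × ℝ → ℝ) (hk : Continuous k)
    (M : ℝ) (hM : ∀ p, |k p| ≤ M)
    (f g : ℝ × ℝ → ℝ) (hf : Continuous f) (hg : Continuous g)
    (c : ℝ) (hc : 0 ≤ c) (n : ℕ)
    (h : ∀ p, |f p - g p| ≤ c * (proj T p.1) ^ n) (p : ℝ × ℝ) :
    |Phi T k f p - Phi T k g p| ≤ c * (M * T) * (proj T p.1) ^ (n + 1) / (n + 1) := by
  have hM0 : 0 ≤ M := le_trans (abs_nonneg _) (hM (0, 0))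
  set a := proj T p.1 with ha'
  set b := proj T p.2 with hb'
  have ha : a ∈ Set.Icc (0:ℝ) T := proj_mem hT _
  have hb : b ∈ Set.Icc (0:ℝ) T := proj_mem hT _
  have hcf : ∀ u : ℝ, Continuous fun v => f (u, v) * k (u, v) := fun u =>
    ((hf.comp (Continuous.prodMk_right u)).mul (hk.comp (Continuous.prodMk_right u)))
  have hcg : ∀ u : ℝ, Continuous fun v => g (u, v) * k (u, v) := fun u =>
    ((hg.comp (Continuous.prodMk_right u)).mul (hk.comp (Continuous.prodMk_right u)))
  have hFi : ∀ u : ℝ, IntervalIntegrable (fun v => f (u, v) * k (u, v)) volume 0 b :=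
    fun u => (hcf u).intervalIntegrable 0 b
  have hGi : ∀ u : ℝ, IntervalIntegrable (fun v => g (u, v) * k (u, v)) volume 0 b :=
    fun u => (hcg u).intervalIntegrable 0 b
  have hHf : Continuous fun u : ℝ => ∫ v in (0:ℝ)..b, f (u, v) * k (u, v) := inner_cont' hk hf b
  have hHg : Continuous fun u : ℝ => ∫ v in (0:ℝ)..b, g (u, v) * k (u, v) := inner_cont' hk hg b
  have key : Phi T k f p - Phi T k g p
      = ∫ u in (0:ℝ)..a, ((∫ v in (0:ℝ)..b, f (u, v) * k (u, v))
        - ∫ v in (0:ℝ)..b, g (u, v) * k (u, v)) := by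
    rw [intervalIntegral.integral_sub (hHf.intervalIntegrable 0 a) (hHg.intervalIntegrable 0 a)]
    simp only [Phi, ← ha', ← hb']
    ring
  have inner_bd : ∀ u ∈ Set.Icc (0:ℝ) a,
      |(∫ v in (0:ℝ)..b, f (u, v) * k (u, v)) - ∫ v in (0:ℝ)..b, g (u, v) * k (u, v)|
        ≤ c * (M * T) * u ^ n := by
    intro u hu
    have hu0 : 0 ≤ u := hu.1
    have huT : u ∈ Set.Icc (0:ℝ) T := ⟨hu0, le_trans hu.2 ha.2⟩
    rw [← intervalIntegral.integral_sub (hFi u) (hGi u)]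
    have e1 : (fun v => f (u, v) * k (u, v) - g (u, v) * k (u, v))
        = fun v => (f (u, v) - g (u, v)) * k (u, v) := by
      funext v; ring
    rw [e1]
    calc |∫ v in (0:ℝ)..b, (f (u, v) - g (u, v)) * k (u, v)|
        ≤ ∫ v in (0:ℝ)..b, |(f (u, v) - g (u, v)) * k (u, v)| :=
          intervalIntegral.abs_integral_le_integral_abs hb.1
      _ ≤ ∫ v in (0:ℝ)..b, c * u ^ n * M := by
          apply intervalIntegral.integral_mono_on hb.1
            (((((hf.comp (Continuous.prodMk_right u)).sub
              (hg.comp (Continuous.prodMk_right u))).mul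
              (hk.comp (Continuous.prodMk_right u))).abs).intervalIntegrable 0 b)
            (intervalIntegrable_const)
          intro v hv
          show |(f (u, v) - g (u, v)) * k (u, v)| ≤ c * u ^ n * M
          rw [abs_mul]
          have h1 : |f (u, v) - g (u, v)| ≤ c * u ^ n := by
            have := h (u, v)
            rwa [proj_eq_self huT] at this
          exact mul_le_mul h1 (hM (u, v)) (abs_nonneg _) (by positivity)
      _ = b * (c * u ^ n * M) := by
          simp only [intervalIntegral.integral_const, smul_eq_mul, sub_zero]
          try ring
      _ ≤ T * (c * u ^ n * M) := by
          apply mul_le_mul_of_nonneg_right hb.2 (by positivity)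
      _ = c * (M * T) * u ^ n := by ring
  rw [key]
  calc |∫ u in (0:ℝ)..a, ((∫ v in (0:ℝ)..b, f (u, v) * k (u, v))
        - ∫ v in (0:ℝ)..b, g (u, v) * k (u, v))|
      ≤ ∫ u in (0:ℝ)..a, |(∫ v in (0:ℝ)..b, f (u, v) * k (u, v))
        - ∫ v in (0:ℝ)..b, g (u, v) * k (u, v)| :=
        intervalIntegral.abs_integral_le_integral_abs ha.1
    _ ≤ ∫ u in (0:ℝ)..a, c * (M * T) * u ^ n := by
        apply intervalIntegral.integral_mono_on ha.1
          (((hHf.sub hHg).abs).intervalIntegrable 0 a)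
          ((continuous_const.mul (continuous_pow n)).intervalIntegrable 0 a)
        exact inner_bd
    _ = c * (M * T) * (a ^ (n + 1) / (n + 1)) := by
        rw [intervalIntegral.integral_const_mul, integral_pow]
        norm_num
    _ = c * (M * T) * a ^ (n + 1) / (n + 1) := by ring

/-- The Picard operator on bounded continuous functions. -/
noncomputable def PhiB (T : ℝ) (hT : 0 ≤ T) (k : ℝ × ℝ → ℝ) (hk : Continuous k)
    (M : ℝ) (hM : ∀ p, |k p| ≤ M)
    (f : BoundedContinuousFunction (ℝ × ℝ) ℝ) : BoundedContinuousFunction (ℝ × ℝ) ℝ :=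
  BoundedContinuousFunction.ofNormedAddCommGroup (Phi T k f)
    (phi_cont T hk f.continuous) (1 + ‖f‖ * (M * T) * T) (by
      intro p
      have h0 : ∀ q : ℝ × ℝ, |(f : ℝ × ℝ → ℝ) q - (fun _ => (0:ℝ)) q| ≤ ‖f‖ * (proj T q.1) ^ 0 := by
        intro q
        simpa using f.norm_coe_le_norm q
      have hstep := phi_step T hT k hk M hM f (fun _ => 0) f.continuous continuous_const
        ‖f‖ (norm_nonneg f) 0 h0 p
      have hzero : Phi T k (fun _ => (0:ℝ)) p = 1 := by
        simp [Phi]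
      rw [hzero] at hstep
      have hproj : (proj T p.1) ^ (0 + 1) ≤ T := by
        simpa using (proj_mem hT p.1).2
      have hM0 : 0 ≤ M := le_trans (abs_nonneg _) (hM (0, 0))
      norm_num at hstep
      have h2 : |Phi T k f p - 1| ≤ ‖f‖ * (M * T) * T := by
        refine le_trans hstep ?_
        exact mul_le_mul_of_nonneg_left (proj_mem hT p.1).2 (by positivity)
      rw [Real.norm_eq_abs]
      have h4 := abs_le.mp h2
      rw [abs_le]
      constructor <;> [linarith; linarith])

lemma PhiB_apply (T : ℝ) (hT : 0 ≤ T) (k : ℝ × ℝ → ℝ) (hk : Continuous k)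
    (M : ℝ) (hM : ∀ p, |k p| ≤ M) (f : BoundedContinuousFunction (ℝ × ℝ) ℝ) (p : ℝ × ℝ) :
    PhiB T hT k hk M hM f p = Phi T k f p := rfl



lemma iterate_bound (T : ℝ) (hT : 0 ≤ T) (k : ℝ × ℝ → ℝ) (hk : Continuous k)
    (M : ℝ) (hM : ∀ p, |k p| ≤ M)
    (f g : BoundedContinuousFunction (ℝ × ℝ) ℝ) (n : ℕ) (p : ℝ × ℝ) :
    |((PhiB T hT k hk M hM)^[n] f) p - ((PhiB T hT k hk M hM)^[n] g) p|
      ≤ dist f g * ((M * T) ^ n / (n.factorial : ℝ)) * (proj T p.1) ^ n := by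
  have hM0 : 0 ≤ M := le_trans (abs_nonneg _) (hM (0, 0))
  induction n generalizing p with
  | zero =>
    simpa [Real.dist_eq] using BoundedContinuousFunction.dist_coe_le_dist (f := f) (g := g) p
  | succ n ih =>
    rw [Function.iterate_succ_apply', Function.iterate_succ_apply']
    rw [PhiB_apply, PhiB_apply]
    have hstep := phi_step T hT k hk M hM _ _
      ((PhiB T hT k hk M hM)^[n] f).continuous ((PhiB T hT k hk M hM)^[n] g).continuous
      (dist f g * ((M * T) ^ n / (n.factorial : ℝ))) (by positivity) n (fun q => ih q) p
    refine le_trans hstep (le_of_eq ?_)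
    have h1 : (n.factorial : ℝ) ≠ 0 := by positivity
    have h2 : ((n : ℝ) + 1) ≠ 0 := by positivity
    rw [pow_succ, Nat.factorial_succ]
    push_cast
    field_simp
    ring

lemma dist_iterate (T : ℝ) (hT : 0 ≤ T) (k : ℝ × ℝ → ℝ) (hk : Continuous k)
    (M : ℝ) (hM : ∀ p, |k p| ≤ M)
    (n : ℕ) (f g : BoundedContinuousFunction (ℝ × ℝ) ℝ) :
    dist ((PhiB T hT k hk M hM)^[n] f) ((PhiB T hT k hk M hM)^[n] g)
      ≤ (M * T * T) ^ n / (n.factorial : ℝ) * dist f g := by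
  have hM0 : 0 ≤ M := le_trans (abs_nonneg _) (hM (0, 0))
  rw [BoundedContinuousFunction.dist_le (by positivity)]
  intro p
  rw [Real.dist_eq]
  refine le_trans (iterate_bound T hT k hk M hM f g n p) ?_
  have h1 : (proj T p.1) ^ n ≤ T ^ n :=
    pow_le_pow_left₀ (proj_mem hT p.1).1 (proj_mem hT p.1).2 n
  calc dist f g * ((M * T) ^ n / (n.factorial : ℝ)) * (proj T p.1) ^ n
      ≤ dist f g * ((M * T) ^ n / (n.factorial : ℝ)) * T ^ n := by
        apply mul_le_mul_of_nonneg_left h1 (by positivity)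
    _ = (M * T * T) ^ n / (n.factorial : ℝ) * dist f g := by
        rw [mul_pow, mul_pow]
        ring

end GoursatAux

open GoursatAux

theorem goursat_signature_kernel_pde_existence_uniqueness
    (T : ℝ) (hT : 0 < T) (d : ℕ)
    (x y : ℝ → EuclideanSpace ℝ (Fin d))
    (dx dy : ℝ → EuclideanSpace ℝ (Fin d))
    (hx : ∀ t ∈ Set.Icc (0 : ℝ) T, HasDerivWithinAt x (dx t) (Set.Icc (0 : ℝ) T) t)
    (hy : ∀ t ∈ Set.Icc (0 : ℝ) T, HasDerivWithinAt y (dy t) (Set.Icc (0 : ℝ) T) t)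
    (hdx : ContinuousOn dx (Set.Icc (0 : ℝ) T))
    (hdy : ContinuousOn dy (Set.Icc (0 : ℝ) T)) :
    ∃ f : ℝ × ℝ → ℝ,
      (ContinuousOn f (Set.Icc (0 : ℝ) T ×ˢ Set.Icc (0 : ℝ) T) ∧
        ∀ s ∈ Set.Icc (0 : ℝ) T, ∀ t ∈ Set.Icc (0 : ℝ) T,
          f (s, t) = 1 + ∫ u in (0 : ℝ)..s, (∫ v in (0 : ℝ)..t,
            f (u, v) * (inner ℝ (dx u) (dy v) : ℝ))) ∧
      ∀ g : ℝ × ℝ → ℝ,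
        (ContinuousOn g (Set.Icc (0 : ℝ) T ×ˢ Set.Icc (0 : ℝ) T) ∧
          ∀ s ∈ Set.Icc (0 : ℝ) T, ∀ t ∈ Set.Icc (0 : ℝ) T,
            g (s, t) = 1 + ∫ u in (0 : ℝ)..s, (∫ v in (0 : ℝ)..t,
              g (u, v) * (inner ℝ (dx u) (dy v) : ℝ))) →
        Set.EqOn g f (Set.Icc (0 : ℝ) T ×ˢ Set.Icc (0 : ℝ) T) := by
  have hT0 : (0:ℝ) ≤ T := hT.le
  obtain ⟨Cx, hCx⟩ := isCompact_Icc.exists_bound_of_continuousOn hdx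
  obtain ⟨Cy, hCy⟩ := isCompact_Icc.exists_bound_of_continuousOn hdy
  have hCx0 : 0 ≤ Cx := le_trans (norm_nonneg _) (hCx 0 ⟨le_refl _, hT0⟩)
  have hCy0 : 0 ≤ Cy := le_trans (norm_nonneg _) (hCy 0 ⟨le_refl _, hT0⟩)
  set M : ℝ := Cx * Cy with hMdef
  have hM0 : 0 ≤ M := mul_nonneg hCx0 hCy0
  set k : ℝ × ℝ → ℝ :=
    fun p => (inner ℝ (dx (proj T p.1)) (dy (proj T p.2)) : ℝ) with hkdef
  have hdxc : Continuous fun t => dx (proj T t) :=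
    hdx.comp_continuous (continuous_proj T) (fun t => proj_mem hT0 t)
  have hdyc : Continuous fun t => dy (proj T t) :=
    hdy.comp_continuous (continuous_proj T) (fun t => proj_mem hT0 t)
  have hk : Continuous k :=
    Continuous.inner (hdxc.comp continuous_fst) (hdyc.comp continuous_snd)
  have hM : ∀ p, |k p| ≤ M := by
    intro p
    calc |k p| ≤ ‖dx (proj T p.1)‖ * ‖dy (proj T p.2)‖ := abs_real_inner_le_norm _ _
      _ ≤ Cx * Cy := mul_le_mul (hCx _ (proj_mem hT0 _)) (hCy _ (proj_mem hT0 _))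
          (norm_nonneg _) hCx0
  set Φ := PhiB T hT0 k hk M hM with hΦdef
  obtain ⟨n, hn⟩ := ((FloorSemiring.tendsto_pow_div_factorial_atTop (K := ℝ)
    (M * T * T)).eventually (gt_mem_nhds one_pos)).exists
  set r : ℝ := (M * T * T) ^ n / (n.factorial : ℝ) with hrdef
  have hr0 : 0 ≤ r := by positivity
  have hlip : LipschitzWith r.toNNReal (Φ^[n]) := by
    apply LipschitzWith.of_dist_le_mul
    intro f g
    rw [Real.coe_toNNReal r hr0]
    exact dist_iterate T hT0 k hk M hM n f g
  have hcontr : ContractingWith r.toNNReal (Φ^[n]) := by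
    constructor
    · exact_mod_cast Real.toNNReal_lt_one.mpr hn
    · exact hlip
  set f₀ : BoundedContinuousFunction (ℝ × ℝ) ℝ := ContractingWith.fixedPoint (Φ^[n]) hcontr
    with hf₀def
  have hfix : Φ f₀ = f₀ := hcontr.isFixedPt_fixedPoint_iterate
  -- rewriting the double integral
  have congr_int : ∀ (h : ℝ × ℝ → ℝ), ∀ a ∈ Set.Icc (0:ℝ) T, ∀ b ∈ Set.Icc (0:ℝ) T,
      (∫ u in (0:ℝ)..a, ∫ v in (0:ℝ)..b, h (u, v) * k (u, v))
        = ∫ u in (0:ℝ)..a, (∫ v in (0:ℝ)..b, h (u, v) * (inner ℝ (dx u) (dy v) : ℝ)) := by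
    intro h a ha b hb
    apply intervalIntegral.integral_congr
    intro u hu
    have hu' : u ∈ Set.Icc (0:ℝ) T := by
      rw [Set.uIcc_of_le ha.1] at hu
      exact ⟨hu.1, le_trans hu.2 ha.2⟩
    apply intervalIntegral.integral_congr
    intro v hv
    have hv' : v ∈ Set.Icc (0:ℝ) T := by
      rw [Set.uIcc_of_le hb.1] at hv
      exact ⟨hv.1, le_trans hv.2 hb.2⟩
    simp only [hkdef, proj_eq_self hu', proj_eq_self hv']
  refine ⟨⇑f₀, ⟨f₀.continuous.continuousOn, ?_⟩, ?_⟩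
  · intro s hs t ht
    have h1 : (f₀ : ℝ × ℝ → ℝ) (s, t) = Phi T k (⇑f₀) (s, t) := by
      conv_lhs => rw [← hfix]
      exact PhiB_apply T hT0 k hk M hM f₀ (s, t)
    rw [h1]
    simp only [Phi, proj_eq_self hs, proj_eq_self ht]
    rw [congr_int (⇑f₀) s hs t ht]
  · rintro g ⟨hgc, hgeq⟩
    have hgc' : Continuous fun p : ℝ × ℝ => g (proj T p.1, proj T p.2) := by
      apply hgc.comp_continuous
        (((continuous_proj T).comp continuous_fst).prodMk
          ((continuous_proj T).comp continuous_snd))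
      intro p
      exact ⟨proj_mem hT0 _, proj_mem hT0 _⟩
    obtain ⟨Cg, hCg⟩ :=
      (isCompact_Icc.prod isCompact_Icc).exists_bound_of_continuousOn hgc
    set g' : BoundedContinuousFunction (ℝ × ℝ) ℝ :=
      BoundedContinuousFunction.ofNormedAddCommGroup
        (fun p : ℝ × ℝ => g (proj T p.1, proj T p.2)) hgc' Cg
        (fun p => hCg _ ⟨proj_mem hT0 _, proj_mem hT0 _⟩) with hg'def
    have hg'fix : Φ g' = g' := by
      ext p
      show Phi T k (⇑g') p = g' p
      have ha : proj T p.1 ∈ Set.Icc (0:ℝ) T := proj_mem hT0 _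
      have hb : proj T p.2 ∈ Set.Icc (0:ℝ) T := proj_mem hT0 _
      have heq := hgeq (proj T p.1) ha (proj T p.2) hb
      have hgp : (g' : ℝ × ℝ → ℝ) p = g (proj T p.1, proj T p.2) := rfl
      rw [hgp, heq]
      simp only [Phi]
      congr 1
      have e2 : ∀ u ∈ Set.uIcc (0:ℝ) (proj T p.1),
          (fun u => ∫ v in (0:ℝ)..proj T p.2, (g' : ℝ × ℝ → ℝ) (u, v) * k (u, v)) u
            = (fun u => ∫ v in (0:ℝ)..proj T p.2, g (u, v) * (inner ℝ (dx u) (dy v) : ℝ)) u := by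
        intro u hu
        have hu' : u ∈ Set.Icc (0:ℝ) T := by
          rw [Set.uIcc_of_le ha.1] at hu
          exact ⟨hu.1, le_trans hu.2 ha.2⟩
        apply intervalIntegral.integral_congr
        intro v hv
        have hv' : v ∈ Set.Icc (0:ℝ) T := by
          rw [Set.uIcc_of_le hb.1] at hv
          exact ⟨hv.1, le_trans hv.2 hb.2⟩
        show g (proj T u, proj T v) * k (u, v) = g (u, v) * (inner ℝ (dx u) (dy v) : ℝ)
        simp only [hkdef, proj_eq_self hu', proj_eq_self hv']
      exact intervalIntegral.integral_congr e2
    have huniq : g' = f₀ := hcontr.fixedPoint_unique (Function.IsFixedPt.iterate hg'fix n)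
    intro p hp
    have h5 : g p = (g' : ℝ × ℝ → ℝ) p := by
      show g p = g (proj T p.1, proj T p.2)
      rw [proj_eq_self hp.1, proj_eq_self hp.2]
    rw [h5, huniq]
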